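/- Every eigenvalue λ of the symmetric tridiagonal 1-D P_N flux matrix Ã (with entries Ã_{ℓ,ℓ+1} = Ã_{ℓ+1,ℓ} = (ℓ+1)/√((2ℓ+1)(2ℓ+3)) and zeros elsewhere) satisfies |λ| < 1. -/

import Mathlib

open Matrix

noncomputable def aaST14 (m : ℕ) : ℝ :=
  ((m : ℝ) + 1) / Real.sqrt ((2 * (m : ℝ) + 1) * (2 * (m : ℝ) + 3))

noncomputable def wwST14 (m : ℕ) : ℝ := Real.sqrt (2 * (m : ℝ) + 1)

lemma wwST14_pos (m : ℕ) : 0 < wwST14 m :=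
  Real.sqrt_pos.2 (by positivity)

lemma aaST14_pos (m : ℕ) : 0 < aaST14 m := by
  unfold aaST14
  positivity

lemma sqrt_mul_eq_ST14 (m : ℕ) :
    Real.sqrt ((2 * (m : ℝ) + 1) * (2 * (m : ℝ) + 3)) = wwST14 m * wwST14 (m + 1) := by
  rw [Real.sqrt_mul (by positivity)]
  unfold wwST14
  push_cast
  ring_nf

lemma id1_ST14 (m : ℕ) : aaST14 m * wwST14 (m + 1) = ((m : ℝ) + 1) / wwST14 m := by
  have h1 := (wwST14_pos m).ne'
  have h2 := (wwST14_pos (m + 1)).ne'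
  unfold aaST14
  rw [sqrt_mul_eq_ST14]
  field_simp

lemma id1'_ST14 (m : ℕ) : aaST14 m * wwST14 m = ((m : ℝ) + 1) / wwST14 (m + 1) := by
  have h1 := (wwST14_pos m).ne'
  have h2 := (wwST14_pos (m + 1)).ne'
  unfold aaST14
  rw [sqrt_mul_eq_ST14]
  field_simp

lemma id2_ST14 (m : ℕ) : (m : ℝ) / wwST14 m + ((m : ℝ) + 1) / wwST14 m = wwST14 m := by
  have h1 := (wwST14_pos m).ne'
  have hsq : wwST14 m * wwST14 m = 2 * (m : ℝ) + 1 :=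
    Real.mul_self_sqrt (by positivity)
  field_simp
  linarith

lemma sum_ite_nat_ST14 {n : ℕ} (g : Fin n → ℝ) (m : ℕ) :
    (∑ j : Fin n, if (j : ℕ) = m then g j else 0) =
      if h : m < n then g ⟨m, h⟩ else 0 := by
  split_ifs with h
  · rw [Finset.sum_eq_single ⟨m, h⟩]
    · simp
    · intro j _ hj
      rw [if_neg]
      intro hc
      exact hj (Fin.ext hc)
    · intro hc
      exact absurd (Finset.mem_univ _) hc
  · apply Finset.sum_eq_zero
    intro j _
    rw [if_neg]
    have := j.isLt
    omega

/-- Every eigenvalue `λ` of the symmetric tridiagonal 1-D P_N flux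
matrix `Ã` (with entries `Ã_{ℓ,ℓ+1} = Ã_{ℓ+1,ℓ} = (ℓ+1)/√((2ℓ+1)(2ℓ+3))` and zeros
elsewhere) satisfies `|λ| < 1`. -/
theorem stmt_14 (N : ℕ) (A : Matrix (Fin (N + 1)) (Fin (N + 1)) ℝ)
    (hA : ∀ ℓ ℓ' : Fin (N + 1), A ℓ ℓ' =
      (if (ℓ' : ℕ) = (ℓ : ℕ) + 1 then
        ((ℓ : ℕ) + 1 : ℝ) / Real.sqrt ((2 * (ℓ : ℕ) + 1) * (2 * (ℓ : ℕ) + 3)) else 0)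
      + (if (ℓ : ℕ) = (ℓ' : ℕ) + 1 then
        ((ℓ' : ℕ) + 1 : ℝ) / Real.sqrt ((2 * (ℓ' : ℕ) + 1) * (2 * (ℓ' : ℕ) + 3)) else 0))
    (lam : ℝ) (v : Fin (N + 1) → ℝ) (hv : v ≠ 0)
    (heig : A.mulVec v = lam • v) :
    |lam| < 1 := by
  by_contra hcon
  push_neg at hcon
  -- extended vector
  set u : ℕ → ℝ := fun m => if h : m < N + 1 then v ⟨m, h⟩ else 0 with hu
  have hu_eq : ∀ (m : ℕ) (h : m < N + 1), u m = v ⟨m, h⟩ := by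
    intro m h; simp only [hu, dif_pos h]
  have hu_zero : ∀ m : ℕ, ¬ m < N + 1 → u m = 0 := by
    intro m h; simp only [hu, dif_neg h]
  -- the recurrence
  have hrec : ∀ (m : ℕ) (hm : m < N + 1),
      lam * u m = aaST14 m * u (m + 1) +
        (if m = 0 then 0 else aaST14 (m - 1) * u (m - 1)) := by
    intro m hm
    have h0 := congrFun heig ⟨m, hm⟩
    simp only [mulVec, dotProduct, Pi.smul_apply, smul_eq_mul] at h0
    rw [hu_eq m hm, ← h0]
    have hterm : ∀ j : Fin (N + 1),
        A ⟨m, hm⟩ j * v j =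
          (if (j : ℕ) = m + 1 then aaST14 m * v j else 0) +
          (if (j : ℕ) = m - 1 ∧ m ≠ 0 then aaST14 (j : ℕ) * v j else 0) := by
      intro j
      rw [hA]
      simp only [Fin.val_mk]
      by_cases h1 : (j : ℕ) = m + 1
      · have h2 : ¬ (m = (j : ℕ) + 1) := by omega
        have h3 : ¬ ((j : ℕ) = m - 1 ∧ m ≠ 0) := by omega
        rw [if_pos h1, if_neg h2, if_pos h1, if_neg h3, add_zero, add_zero]
        unfold aaST14; ring_nf
      · by_cases h2 : m = (j : ℕ) + 1
        · have h3 : (j : ℕ) = m - 1 ∧ m ≠ 0 := ⟨by omega, by omega⟩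
          rw [if_neg h1, if_pos h2, if_neg h1, if_pos h3, zero_add, zero_add]
          unfold aaST14; ring_nf
        · have h3 : ¬ ((j : ℕ) = m - 1 ∧ m ≠ 0) := by omega
          rw [if_neg h1, if_neg h2, if_neg h1, if_neg h3, add_zero, zero_mul]
    rw [Finset.sum_congr rfl fun j _ => hterm j, Finset.sum_add_distrib]
    congr 1
    · rw [sum_ite_nat_ST14 (fun j => aaST14 m * v j) (m + 1)]
      by_cases h : m + 1 < N + 1
      · rw [dif_pos h, hu_eq (m + 1) h]
      · rw [dif_neg h, hu_zero (m + 1) h, mul_zero]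
    · by_cases hm0 : m = 0
      · rw [if_pos hm0]
        apply Finset.sum_eq_zero
        intro j _
        rw [if_neg (by omega)]
      · rw [if_neg hm0]
        have : ∀ j : Fin (N + 1),
            (if (j : ℕ) = m - 1 ∧ m ≠ 0 then aaST14 (j : ℕ) * v j else 0) =
            (if (j : ℕ) = m - 1 then aaST14 (j : ℕ) * v j else 0) := by
          intro j
          by_cases hj : (j : ℕ) = m - 1
          · rw [if_pos ⟨hj, hm0⟩, if_pos hj]
          · rw [if_neg (fun hc => hj hc.1), if_neg hj]
        rw [Finset.sum_congr rfl fun j _ => this j,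
          sum_ite_nat_ST14 (fun j => aaST14 (j : ℕ) * v j) (m - 1),
          dif_pos (by omega : m - 1 < N + 1)]
        rw [hu_eq (m - 1) (by omega)]
    -- done
  -- choose maximizer of |v j| / ww j
  obtain ⟨i, -, hi⟩ := Finset.exists_max_image (Finset.univ : Finset (Fin (N + 1)))
    (fun j => |v j| / wwST14 (j : ℕ)) ⟨0, Finset.mem_univ _⟩
  set M : ℝ := |v i| / wwST14 (i : ℕ) with hM
  have hMnonneg : 0 ≤ M := div_nonneg (abs_nonneg _) (wwST14_pos _).le
  have hmax : ∀ m : ℕ, |u m| ≤ M * wwST14 m := by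
    intro m
    by_cases h : m < N + 1
    · rw [hu_eq m h]
      have := hi ⟨m, h⟩ (Finset.mem_univ _)
      calc |v ⟨m, h⟩| = |v ⟨m, h⟩| / wwST14 m * wwST14 m :=
            (div_mul_cancel₀ _ (wwST14_pos m).ne').symm
        _ ≤ M * wwST14 m := by
            apply mul_le_mul_of_nonneg_right _ (wwST14_pos m).le
            exact this
    · rw [hu_zero m h, abs_zero]
      exact mul_nonneg hMnonneg (wwST14_pos m).le
  have hMpos : 0 < M := by
    obtain ⟨j, hj⟩ := Function.ne_iff.1 hv
    have h1 : 0 < |v j| / wwST14 (j : ℕ) :=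
      div_pos (abs_pos.2 hj) (wwST14_pos _)
    exact lt_of_lt_of_le h1 (hi j (Finset.mem_univ _))
  -- the climbing step
  have step : ∀ m : ℕ, m < N + 1 → M * wwST14 m ≤ |u m| →
      M * wwST14 (m + 1) ≤ |u (m + 1)| := by
    intro m hm hum
    have h1 := hrec m hm
    have hprev : |(if m = 0 then (0:ℝ) else aaST14 (m - 1) * u (m - 1))| ≤
        (m : ℝ) / wwST14 m * M := by
      by_cases hm0 : m = 0
      · subst hm0
        simp [wwST14_pos 0, hMnonneg]
      · rw [if_neg hm0]
        obtain ⟨k, rfl⟩ := Nat.exists_eq_succ_of_ne_zero hm0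
        simp only [Nat.succ_sub_one]
        rw [abs_mul, abs_of_pos (aaST14_pos k)]
        calc aaST14 k * |u k| ≤ aaST14 k * (M * wwST14 k) :=
              mul_le_mul_of_nonneg_left (hmax k) (aaST14_pos k).le
          _ = (aaST14 k * wwST14 k) * M := by ring
          _ = ((k : ℝ) + 1) / wwST14 (k + 1) * M := by rw [id1'_ST14]
          _ = ((k + 1 : ℕ) : ℝ) / wwST14 (k + 1) * M := by push_cast; ring
    have h2 : M * wwST14 m ≤ aaST14 m * |u (m + 1)| + (m : ℝ) / wwST14 m * M := by
      calc M * wwST14 m ≤ |u m| := hum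
        _ ≤ |lam| * |u m| := le_mul_of_one_le_left (abs_nonneg _) hcon
        _ = |lam * u m| := (abs_mul _ _).symm
        _ ≤ |aaST14 m * u (m + 1)| +
            |(if m = 0 then (0:ℝ) else aaST14 (m - 1) * u (m - 1))| := by
              rw [h1]; exact abs_add_le _ _
        _ ≤ aaST14 m * |u (m + 1)| + (m : ℝ) / wwST14 m * M := by
              rw [abs_mul, abs_of_pos (aaST14_pos m)]
              exact add_le_add le_rfl hprev
    have h3 : M * wwST14 m = (m : ℝ) / wwST14 m * M + aaST14 m * (M * wwST14 (m + 1)) := by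
      have := id2_ST14 m
      have h4 := id1_ST14 m
      calc M * wwST14 m = M * ((m : ℝ) / wwST14 m + ((m : ℝ) + 1) / wwST14 m) := by
            rw [this]
        _ = (m : ℝ) / wwST14 m * M + M * (((m : ℝ) + 1) / wwST14 m) := by ring
        _ = (m : ℝ) / wwST14 m * M + aaST14 m * (M * wwST14 (m + 1)) := by
            rw [← h4]; ring
    have h5 : aaST14 m * (M * wwST14 (m + 1)) ≤ aaST14 m * |u (m + 1)| := by
      linarith [h2, h3]
    exact le_of_mul_le_mul_left h5 (aaST14_pos m)
  -- climb from i to N+1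
  have climb : ∀ m : ℕ, (i : ℕ) ≤ m → m ≤ N + 1 → M * wwST14 m ≤ |u m| := by
    intro m
    induction m with
    | zero =>
        intro h1 _
        have hi0 : (i : ℕ) = 0 := Nat.le_zero.mp h1
        have hMe : M * wwST14 0 = |v i| := by
          rw [hM, hi0, div_mul_cancel₀ _ (wwST14_pos 0).ne']
        rw [hMe, hu_eq 0 (Nat.succ_pos N)]
        have : (⟨0, Nat.succ_pos N⟩ : Fin (N + 1)) = i := Fin.ext (by simp [hi0])
        rw [this]
    | succ k ih =>
        intro h1 h2
        by_cases hik : (i : ℕ) ≤ k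
        · exact step k (by omega) (ih hik (by omega))
        · have hik' : (i : ℕ) = k + 1 := by omega
          rw [hM, ← hik']
          rw [hu_eq (i : ℕ) i.isLt]
          simp only [Fin.eta]
          rw [div_mul_cancel₀ _ (wwST14_pos _).ne']
  have hfinal := climb (N + 1) (by omega) le_rfl
  rw [hu_zero (N + 1) (by omega), abs_zero] at hfinal
  nlinarith [wwST14_pos (N + 1), hMpos]
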